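/- Let Ω = (0,1) × (0,ε) ⊂ ℝ² and let u_δ be a smooth approximation (mollification at scale δ) of the function (x,y) ↦ χ_{[0,1/2]}(x) − χ_{(1/2,1]}(x). Then as δ → 0, ‖u_δ‖_{L¹(Ω)} → ε and ‖∇u_δ‖_{L¹(Ω)} → 2ε; hence the ratio ‖u‖_{L¹}/‖∇u‖_{L¹} over mean-zero functions on Ω can be made arbitrarily close to 1/2, while diam(Ω) = √(1+ε²). -/

import Mathlib

open MeasureTheory Set

lemma transfer (ε : ℝ) (hε : 0 < ε) (g : ℝ → ℝ)
    (Ω : Set (EuclideanSpace ℝ (Fin 2)))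
    (hΩ : Ω = {p | p 0 ∈ Ioo (0:ℝ) 1 ∧ p 1 ∈ Ioo (0:ℝ) ε}) :
    (∫ p in Ω, g (p 0)) = (∫ x in Ioo (0:ℝ) 1, g x) * ε := by
  have e1 := EuclideanSpace.volume_preserving_symm_measurableEquiv_toLp (Fin 2)
  have e2 := volume_preserving_finTwoArrow ℝ
  have hpres := e2.comp e1
  have hemb : MeasurableEmbedding
      ((MeasurableEquiv.finTwoArrow) ∘ ((MeasurableEquiv.toLp 2 (Fin 2 → ℝ)).symm)) :=
    ((MeasurableEquiv.toLp 2 (Fin 2 → ℝ)).symm.trans MeasurableEquiv.finTwoArrow).measurableEmbedding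
  have key := hpres.setIntegral_preimage_emb hemb (fun z : ℝ × ℝ => g z.1 * 1)
      (Ioo (0:ℝ) 1 ×ˢ Ioo (0:ℝ) ε)
  have hΩ' : Ω = ((MeasurableEquiv.finTwoArrow) ∘ ((MeasurableEquiv.toLp 2 (Fin 2 → ℝ)).symm)) ⁻¹'
      (Ioo (0:ℝ) 1 ×ˢ Ioo (0:ℝ) ε) := by
    rw [hΩ]; rfl
  simp only [mul_one] at key
  rw [hΩ']
  rw [show (∫ p in ((MeasurableEquiv.finTwoArrow) ∘ ((MeasurableEquiv.toLp 2 (Fin 2 → ℝ)).symm)) ⁻¹'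
      (Ioo (0:ℝ) 1 ×ˢ Ioo (0:ℝ) ε), g (p 0)) = _ from key]
  have := setIntegral_prod_mul (μ := (volume : Measure ℝ)) (ν := (volume : Measure ℝ))
      g (fun _ => (1:ℝ)) (Ioo (0:ℝ) 1) (Ioo (0:ℝ) ε)
  simp only [mul_one] at this
  rw [Measure.volume_eq_prod, this]
  simp [Real.volume_Ioo]
  exact Or.inl hε.le

noncomputable def stepf (δ : ℝ) (x : ℝ) : ℝ :=
  2 * Real.smoothTransition ((1/2 + δ - x)/(2*δ)) - 1

lemma eNIG_mono : Monotone expNegInvGlue := by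
  intro x y hxy
  rcases le_or_gt x 0 with hx | hx
  · rw [expNegInvGlue.zero_of_nonpos hx]; exact expNegInvGlue.nonneg y
  · have hy : 0 < y := hx.trans_le hxy
    simp only [expNegInvGlue, if_neg (not_le.2 hx), if_neg (not_le.2 hy)]
    exact Real.exp_le_exp.2 (by rw [neg_le_neg_iff]; exact inv_anti₀ hx hxy)

lemma sT_mono : Monotone Real.smoothTransition := by
  intro x y hxy
  unfold Real.smoothTransition
  rw [div_le_div_iff₀ (Real.smoothTransition.pos_denom x) (Real.smoothTransition.pos_denom y)]
  have h1 : expNegInvGlue x ≤ expNegInvGlue y := eNIG_mono hxy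
  have h2 : expNegInvGlue (1 - y) ≤ expNegInvGlue (1 - x) :=
    eNIG_mono (by linarith)
  nlinarith [expNegInvGlue.nonneg x, expNegInvGlue.nonneg y,
    expNegInvGlue.nonneg (1 - x), expNegInvGlue.nonneg (1 - y)]

lemma sT_symm (x : ℝ) : Real.smoothTransition (1 - x) = 1 - Real.smoothTransition x := by
  unfold Real.smoothTransition
  rw [sub_sub_cancel]
  field_simp [ (Real.smoothTransition.pos_denom x).ne', (Real.smoothTransition.pos_denom (1-x)).ne']
  rw [add_comm (expNegInvGlue (1 - x)), mul_div_assoc,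
    div_self (Real.smoothTransition.pos_denom x).ne', mul_one]
  ring

lemma antitone_deriv_nonpos {f : ℝ → ℝ} (hf : Antitone f) (x : ℝ) : deriv f x ≤ 0 := by
  by_cases hd : DifferentiableAt ℝ f x
  · have h := hasDerivAt_iff_tendsto_slope.1 hd.hasDerivAt
    have h' : Filter.Tendsto (slope f x) (nhdsWithin x (Ioi x)) (nhds (deriv f x)) :=
      h.mono_left (nhdsWithin_mono x fun y hy => ne_of_gt hy)
    refine le_of_tendsto h' ?_
    filter_upwards [self_mem_nhdsWithin] with y hy
    rw [slope_def_field]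
    exact div_nonpos_of_nonpos_of_nonneg (by simpa using hf (le_of_lt hy)) (by linarith [hy.out])
  · simp [deriv_zero_of_not_differentiableAt hd]

section stepf
variable {δ : ℝ} (hδ : 0 < δ)

lemma stepf_contDiff : ContDiff ℝ ((⊤ : ℕ∞) : WithTop ℕ∞) (stepf δ) := by
  unfold stepf
  have h1 : ContDiff ℝ ((⊤ : ℕ∞) : WithTop ℕ∞) (fun x : ℝ => (1/2 + δ - x)/(2*δ)) :=
    (contDiff_const.sub contDiff_id).div_const _
  exact (contDiff_const.mul (Real.smoothTransition.contDiff.comp h1)).sub contDiff_const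

include hδ

lemma stepf_anti : Antitone (stepf δ) := by
  intro x y hxy
  unfold stepf
  have : (1/2 + δ - y)/(2*δ) ≤ (1/2 + δ - x)/(2*δ) :=
    div_le_div_of_nonneg_right (by linarith) (by linarith) |>.trans_eq rfl
  have := sT_mono this
  linarith

lemma stepf_eq_one {x : ℝ} (hx : x ≤ 1/2 - δ) : stepf δ x = 1 := by
  unfold stepf
  rw [Real.smoothTransition.one_of_one_le]
  · ring
  · rw [le_div_iff₀ (by linarith)]; linarith

lemma stepf_eq_negone {x : ℝ} (hx : 1/2 + δ ≤ x) : stepf δ x = -1 := by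
  unfold stepf
  rw [Real.smoothTransition.zero_of_nonpos]
  · ring
  · exact div_nonpos_of_nonpos_of_nonneg (by linarith) (by linarith)

omit hδ in
lemma stepf_abs_le (x : ℝ) : |stepf δ x| ≤ 1 := by
  unfold stepf
  rw [abs_le]
  constructor <;>
    linarith [Real.smoothTransition.nonneg ((1/2 + δ - x)/(2*δ)),
      Real.smoothTransition.le_one ((1/2 + δ - x)/(2*δ))]

lemma stepf_symm (x : ℝ) : stepf δ (1 - x) = - stepf δ x := by
  unfold stepf
  have harg : (1/2 + δ - (1 - x))/(2*δ) = 1 - (1/2 + δ - x)/(2*δ) := by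
    field_simp; ring
  rw [harg, sT_symm]
  ring
end stepf

section integrals
variable {δ : ℝ} (hδ : 0 < δ) (hδ4 : δ ≤ 1/4)

lemma stepf_cont : Continuous (stepf δ) := stepf_contDiff.continuous

lemma stepf_deriv_cont : Continuous (deriv (stepf δ)) :=
  stepf_contDiff.continuous_deriv (by exact_mod_cast le_top)

lemma Ioo_eq_interval (g : ℝ → ℝ) :
    (∫ x in Ioo (0:ℝ) 1, g x) = ∫ x in (0:ℝ)..1, g x := by
  rw [intervalIntegral.integral_of_le zero_le_one, integral_Ioc_eq_integral_Ioo]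

include hδ

lemma stepf_integral_zero : (∫ x in Ioo (0:ℝ) 1, stepf δ x) = 0 := by
  rw [Ioo_eq_interval]
  have h := intervalIntegral.integral_comp_sub_left (a := (0:ℝ)) (b := 1) (stepf δ) 1
  simp only [sub_zero, sub_self] at h
  have h2 : (∫ x in (0:ℝ)..1, stepf δ (1 - x)) = ∫ x in (0:ℝ)..1, -stepf δ x := by
    congr 1; ext x; exact stepf_symm hδ x
  rw [h2, intervalIntegral.integral_neg] at h
  linarith

include hδ4

lemma stepf_deriv_integral : (∫ x in Ioo (0:ℝ) 1, |deriv (stepf δ) x|) = 2 := by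
  rw [Ioo_eq_interval]
  have habs : ∀ x : ℝ, |deriv (stepf δ) x| = -deriv (stepf δ) x := fun x =>
    abs_of_nonpos (antitone_deriv_nonpos (stepf_anti hδ) x)
  simp only [habs]
  rw [intervalIntegral.integral_neg]
  rw [intervalIntegral.integral_deriv_eq_sub
    (fun x _ => (stepf_contDiff.differentiable (by simp)).differentiableAt)
    ((stepf_deriv_cont).intervalIntegrable _ _)]
  rw [stepf_eq_negone hδ (by linarith), stepf_eq_one hδ (by linarith)]
  ring

lemma stepf_abs_integral :
    |(∫ x in Ioo (0:ℝ) 1, |stepf δ x|) - 1| ≤ 2 * δ := by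
  rw [Ioo_eq_interval]
  set J := ∫ x in (0:ℝ)..1, |stepf δ x| with hJ
  have hcont : Continuous (fun x => |stepf δ x|) := stepf_cont.abs
  have hint : ∀ a b : ℝ, IntervalIntegrable (fun x => |stepf δ x|) volume a b :=
    fun a b => hcont.intervalIntegrable a b
  have hub : J ≤ 1 := by
    calc J ≤ ∫ _x in (0:ℝ)..1, (1:ℝ) := by
            apply intervalIntegral.integral_mono_on zero_le_one (hint 0 1)
              (intervalIntegrable_const)
            intro x _; exact stepf_abs_le x
      _ = 1 := by simp
  have hlb : 1 - 2*δ ≤ J := by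
    have hsplit : (∫ x in (0:ℝ)..(1/2-δ), |stepf δ x|) + (∫ x in (1/2-δ:ℝ)..(1/2+δ), |stepf δ x|)
        + (∫ x in (1/2+δ:ℝ)..1, |stepf δ x|) = J := by
      rw [intervalIntegral.integral_add_adjacent_intervals (hint _ _) (hint _ _),
        intervalIntegral.integral_add_adjacent_intervals (hint _ _) (hint _ _)]
    have h1 : (∫ x in (0:ℝ)..(1/2-δ), |stepf δ x|) = 1/2 - δ := by
      rw [intervalIntegral.integral_congr (g := fun _ => (1:ℝ)) ?_]
      · simp
      · intro x hx
        rw [uIcc_of_le (by linarith)] at hx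
        show |stepf δ x| = 1
        rw [stepf_eq_one hδ hx.2, abs_one]
    have h3 : (∫ x in (1/2+δ:ℝ)..1, |stepf δ x|) = 1/2 - δ := by
      rw [intervalIntegral.integral_congr (g := fun _ => (1:ℝ)) ?_]
      · simp; ring
      · intro x hx
        rw [uIcc_of_le (by linarith)] at hx
        show |stepf δ x| = 1
        rw [stepf_eq_negone hδ hx.1, abs_neg, abs_one]
    have h2 : 0 ≤ ∫ x in (1/2-δ:ℝ)..(1/2+δ), |stepf δ x| :=
      intervalIntegral.integral_nonneg (by linarith) (fun x _ => abs_nonneg _)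
    linarith
  rw [abs_le]; constructor <;> linarith

end integrals

lemma abs_apply_le_norm (p : EuclideanSpace ℝ (Fin 2)) (i : Fin 2) : |p i| ≤ ‖p‖ := by
  rw [EuclideanSpace.norm_eq, ← Real.sqrt_sq_eq_abs]
  apply Real.sqrt_le_sqrt
  have : |p i| ^ 2 ≤ ∑ j, ‖p j‖ ^ 2 := by
    refine Finset.single_le_sum (f := fun j => ‖p j‖^2) (fun j _ => by positivity)
      (Finset.mem_univ i) |>.trans_eq' ?_
    simp [Real.norm_eq_abs]
  simpa [sq_abs] using this

lemma norm_proj_eq : ‖(EuclideanSpace.proj (0 : Fin 2) : EuclideanSpace ℝ (Fin 2) →L[ℝ] ℝ)‖ = 1 := by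
  apply le_antisymm
  · apply ContinuousLinearMap.opNorm_le_bound _ zero_le_one
    intro p
    simpa [Real.norm_eq_abs] using abs_apply_le_norm p 0
  · have h := (EuclideanSpace.proj (0 : Fin 2) :
      EuclideanSpace ℝ (Fin 2) →L[ℝ] ℝ).le_opNorm (EuclideanSpace.single 0 (1:ℝ))
    simpa [EuclideanSpace.norm_single] using h

lemma fderiv_norm_eq {f : ℝ → ℝ} (hf : Differentiable ℝ f) (p : EuclideanSpace ℝ (Fin 2)) :
    ‖fderiv ℝ (fun q : EuclideanSpace ℝ (Fin 2) => f (q 0)) p‖ = |deriv f (p 0)| := by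
  set L := (EuclideanSpace.proj (0 : Fin 2) : EuclideanSpace ℝ (Fin 2) →L[ℝ] ℝ)
  have hL : HasFDerivAt (fun q : EuclideanSpace ℝ (Fin 2) => L q) L p := L.hasFDerivAt
  have hF : HasDerivAt f (deriv f (p 0)) (p 0) := (hf (p 0)).hasDerivAt
  have hu : HasFDerivAt (fun q : EuclideanSpace ℝ (Fin 2) => f (q 0))
      (deriv f (p 0) • L) p := hF.comp_hasFDerivAt p hL
  rw [hu.fderiv, norm_smul, norm_proj_eq, Real.norm_eq_abs, mul_one]

lemma diam_upper (ε : ℝ) (hε : 0 < ε) (Ω : Set (EuclideanSpace ℝ (Fin 2)))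
    (hΩ : Ω = {p | p 0 ∈ Ioo (0:ℝ) 1 ∧ p 1 ∈ Ioo (0:ℝ) ε}) :
    ∀ p ∈ Ω, ∀ q ∈ Ω, dist p q ≤ Real.sqrt (1 + ε ^ 2) := by
  intro p hp q hq
  rw [hΩ] at hp hq
  rw [EuclideanSpace.dist_eq, Fin.sum_univ_two]
  apply Real.sqrt_le_sqrt
  have h0 : dist (p 0) (q 0) ^ 2 ≤ 1 := by
    rw [Real.dist_eq, sq_abs]
    nlinarith [hp.1.1, hp.1.2, hq.1.1, hq.1.2]
  have h1 : dist (p 1) (q 1) ^ 2 ≤ ε ^ 2 := by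
    rw [Real.dist_eq, sq_abs]
    nlinarith [hp.2.1, hp.2.2, hq.2.1, hq.2.2]
  linarith

lemma diam_eq (ε : ℝ) (hε : 0 < ε) (Ω : Set (EuclideanSpace ℝ (Fin 2)))
    (hΩ : Ω = {p | p 0 ∈ Ioo (0:ℝ) 1 ∧ p 1 ∈ Ioo (0:ℝ) ε}) :
    Metric.diam Ω = Real.sqrt (1 + ε ^ 2) := by
  have hup := diam_upper ε hε Ω hΩ
  have hB : Bornology.IsBounded Ω := Metric.isBounded_iff_exists_ge 0 |>.2
    ⟨max 0 (Real.sqrt (1 + ε ^ 2)), le_max_left _ _,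
     fun p hp q hq => (hup p hp q hq).trans (le_max_right _ _)⟩
  apply le_antisymm
  · exact Metric.diam_le_of_forall_dist_le (Real.sqrt_nonneg _) hup
  · have key : ∀ t ∈ Ioo (0:ℝ) (1/2), (1 - 2*t) * Real.sqrt (1+ε^2) ≤ Metric.diam Ω := by
      intro t ht
      obtain ⟨ht0, ht2⟩ := ht
      set p : EuclideanSpace ℝ (Fin 2) := (WithLp.equiv 2 (Fin 2 → ℝ)).symm ![t, t*ε] with hpdef
      set q : EuclideanSpace ℝ (Fin 2) :=
        (WithLp.equiv 2 (Fin 2 → ℝ)).symm ![1-t, (1-t)*ε] with hqdef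
      have hp0 : p 0 = t := rfl
      have hp1 : p 1 = t*ε := rfl
      have hq0 : q 0 = 1-t := rfl
      have hq1 : q 1 = (1-t)*ε := rfl
      have hp : p ∈ Ω := by
        rw [hΩ]
        exact ⟨by rw [hp0]; exact ⟨ht0, by linarith⟩,
          by rw [hp1]; exact ⟨by positivity, by nlinarith⟩⟩
      have hq : q ∈ Ω := by
        rw [hΩ]
        exact ⟨by rw [hq0]; exact ⟨by linarith, by linarith⟩,
          by rw [hq1]; exact ⟨by nlinarith, by nlinarith⟩⟩
      have hd : dist p q = (1-2*t) * Real.sqrt (1+ε^2) := by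
        rw [EuclideanSpace.dist_eq, Fin.sum_univ_two, hp0, hp1, hq0, hq1,
          Real.dist_eq, Real.dist_eq]
        rw [show |t - (1-t)| ^2 + |t*ε - (1-t)*ε|^2 = (1-2*t)^2 * (1+ε^2) by
          rw [sq_abs, sq_abs]; ring]
        rw [Real.sqrt_mul (sq_nonneg _), Real.sqrt_sq (by linarith)]
      rw [← hd]
      exact Metric.dist_le_diam_of_mem hB hp hq
    have htend : Filter.Tendsto (fun t : ℝ => (1 - 2*t) * Real.sqrt (1+ε^2))
        (nhdsWithin 0 (Ioi 0)) (nhds (Real.sqrt (1+ε^2))) := by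
      have hc : Filter.Tendsto (fun t : ℝ => (1 - 2*t) * Real.sqrt (1+ε^2)) (nhds 0)
          (nhds ((1 - 2*0) * Real.sqrt (1+ε^2))) :=
        (((continuous_const.sub (continuous_const.mul continuous_id)).mul
          continuous_const).tendsto 0)
      simpa using hc.mono_left nhdsWithin_le_nhds
    refine le_of_tendsto htend ?_
    filter_upwards [Ioo_mem_nhdsGT_of_mem (by norm_num : (0:ℝ) ∈ Ico (0:ℝ) (1/2))] with t htI
    exact key t htI

/-- Sharpness of the Acosta–Durán constant 1/2 on the thin rectangle
`Ω = (0,1) × (0,ε)`: its diameter is `√(1+ε²)`, and there are mean-zero C¹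
functions (mollified step functions) whose `L¹` norm is arbitrarily close to `ε`
while the `L¹` norm of the gradient is arbitrarily close to `2ε`. -/
theorem stmt_12 (ε : ℝ) (hε : 0 < ε)
    (Ω : Set (EuclideanSpace ℝ (Fin 2)))
    (hΩ : Ω = {p | p 0 ∈ Ioo (0:ℝ) 1 ∧ p 1 ∈ Ioo (0:ℝ) ε}) :
    Metric.diam Ω = Real.sqrt (1 + ε ^ 2) ∧
    ∀ η > 0, ∃ u : EuclideanSpace ℝ (Fin 2) → ℝ,
      ContDiff ℝ 1 u ∧
      (∫ x in Ω, u x) = 0 ∧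
      |(∫ x in Ω, |u x|) - ε| < η ∧
      |(∫ x in Ω, ‖fderiv ℝ u x‖) - 2 * ε| < η := by
  refine ⟨diam_eq ε hε Ω hΩ, ?_⟩
  intro η hη
  set δ := min (1/4 : ℝ) (η / (4*ε+1)) with hδdef
  have hδ : 0 < δ := lt_min (by norm_num) (by positivity)
  have hδ4 : δ ≤ 1/4 := min_le_left _ _
  have hδη : 2 * δ * ε < η := by
    have h1 : δ ≤ η/(4*ε+1) := min_le_right _ _
    have h2 : (0:ℝ) < 4*ε+1 := by linarith
    have h1' : δ * (4*ε+1) ≤ η := (le_div_iff₀ h2).1 h1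
    nlinarith
  refine ⟨fun p => stepf δ (p 0), ?_, ?_, ?_, ?_⟩
  · exact (stepf_contDiff.of_le (by exact_mod_cast le_top)).comp
      ((EuclideanSpace.proj (𝕜 := ℝ) (0 : Fin 2)).contDiff)
  · rw [transfer ε hε (stepf δ) Ω hΩ, stepf_integral_zero hδ, zero_mul]
  · rw [transfer ε hε (fun x => |stepf δ x|) Ω hΩ]
    have habs := stepf_abs_integral hδ hδ4
    set I := ∫ x in Ioo (0:ℝ) 1, |stepf δ x| with hIdef
    calc |I*ε - ε| = |I - 1| * ε := by rw [← sub_one_mul, abs_mul, abs_of_pos hε]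
      _ ≤ 2*δ*ε := mul_le_mul_of_nonneg_right habs hε.le
      _ < η := hδη
  · have hdiffble : Differentiable ℝ (stepf δ) :=
      stepf_contDiff.differentiable (by simp)
    have hcongr : (∫ x in Ω, ‖fderiv ℝ (fun q : EuclideanSpace ℝ (Fin 2) => stepf δ (q 0)) x‖)
        = ∫ x in Ω, |deriv (stepf δ) (x 0)| := by
      apply integral_congr_ae
      filter_upwards with x
      exact fderiv_norm_eq hdiffble x
    rw [hcongr, transfer ε hε (fun y => |deriv (stepf δ) y|) Ω hΩ, stepf_deriv_integral hδ hδ4]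
    simpa using hη
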